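/- Define f_{m,k}(q) by (1-q)/((zq;q)_k (q/z;q)_k) = ∑_{m∈ℤ} z^m f_{m,k}(q). Then f_{0,2}(q) = −q + 1/(1-q^3) + q^2/(1-q^4) + q^8/((1-q^3)(1-q^4)). -/

import Mathlib

/-- `akm k m n` is the coefficient of `z^m q^n` in
`1/((qz;q)_k (q/z;q)_k) = ∏_{i=1}^{k} 1/((1 - z q^i)(1 - q^i/z))`, where
`(x;q)_k = ∏_{i=0}^{k-1} (1 - x q^i)`: it counts pairs `(α, β)` of `k`-tuples of
nonnegative integers with `∑_{i=1}^k i(α_i + β_i) = n` and `∑ α_i - ∑ β_i = m`. -/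
def akm (k : ℕ) (m : ℤ) (n : ℕ) : ℕ :=
  (Finset.univ.filter
    (fun p : (Fin k → Fin (n + 1)) × (Fin k → Fin (n + 1)) =>
      (∑ i : Fin k, (i.1 + 1) * (((p.1 i : ℕ)) + (p.2 i : ℕ)) = n) ∧
      ((∑ i : Fin k, ((p.1 i : ℕ) : ℤ)) - ∑ i : Fin k, ((p.2 i : ℕ) : ℤ)) = m)).card

/-- `fmk k m n` is the coefficient of `q^n` in `f_{m,k}(q)`, which is defined by
`(1-q)/((zq;q)_k (q/z;q)_k) = ∑_{m ∈ ℤ} z^m f_{m,k}(q)`; thus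
`fmk k m n = a_{k,m}(n) - a_{k,m}(n-1)`. -/
def fmk (k : ℕ) (m : ℤ) (n : ℕ) : ℤ :=
  (akm k m n : ℤ) - (if n = 0 then 0 else (akm k m (n - 1) : ℤ))

/-- The coefficient of `q^n` in `q^s/((1-q^a)(1-q^b)) = ∑_{i,j≥0} q^{s+ai+bj}`. -/
def geomCoeff (s a b n : ℕ) : ℤ :=
  if s ≤ n then
    (((Finset.range (n + 1) ×ˢ Finset.range (n + 1)).filter
      (fun p => a * p.1 + b * p.2 = n - s)).card : ℤ)
  else 0

/-! ### Auxiliary definitions -/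

/-- The set of quadruples `(a,b,c,d)` with `a + 2b + c + 2d = n` and `a + b = c + d`. -/
def Qs (n : ℕ) : Finset (ℕ × ℕ × ℕ × ℕ) :=
  ((Finset.range (n+1)) ×ˢ (Finset.range (n+1)) ×ˢ (Finset.range (n+1)) ×ˢ (Finset.range (n+1))).filter
    (fun p => p.1 + 2*p.2.1 + p.2.2.1 + 2*p.2.2.2 = n ∧ p.1 + p.2.1 = p.2.2.1 + p.2.2.2)

/-- The number of `(a,b)` with `2a + 4b = m`. -/
def rr (m : ℕ) : ℕ := if m % 2 = 0 then m/4 + 1 else 0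

/-- The number of `(i,j)` with `3i + 4j = m`. -/
def gc (m : ℕ) : ℕ :=
  ((Finset.range (m+1) ×ˢ Finset.range (m+1)).filter (fun p => 3*p.1 + 4*p.2 = m)).card

/-- The right-hand side of the target identity. -/
def Rhs (n : ℕ) : ℤ :=
  (if n = 1 then (-1 : ℤ) else 0) + (if 3 ∣ n then 1 else 0)
    + (if 2 ≤ n ∧ 4 ∣ (n - 2) then 1 else 0) + geomCoeff 8 3 4 n

lemma mem_Qs {n : ℕ} {p : ℕ × ℕ × ℕ × ℕ} : p ∈ Qs n ↔
    p.1 + 2*p.2.1 + p.2.2.1 + 2*p.2.2.2 = n ∧ p.1 + p.2.1 = p.2.2.1 + p.2.2.2 := by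
  simp only [Qs, Finset.mem_filter, Finset.mem_product, Finset.mem_range]
  constructor
  · rintro ⟨_, h⟩; exact h
  · rintro ⟨h1, h2⟩; exact ⟨⟨by omega, by omega, by omega, by omega⟩, h1, h2⟩

open Fin.NatCast in
lemma akm_eq_qs (n : ℕ) : akm 2 0 n = (Qs n).card := by
  unfold akm Qs
  apply Finset.card_nbij'
    (i := fun p => ((p.1 0 : ℕ), (p.1 1 : ℕ), (p.2 0 : ℕ), (p.2 1 : ℕ)))
    (j := fun q => (![(q.1 : Fin (n+1)), (q.2.1 : Fin (n+1))],
                    ![(q.2.2.1 : Fin (n+1)), (q.2.2.2 : Fin (n+1))]))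
  · intro p hp
    simp only [Finset.mem_coe, Finset.mem_filter, Finset.mem_univ, true_and, Fin.sum_univ_two] at hp
    simp only [Finset.mem_coe, Finset.mem_filter, Finset.mem_product, Finset.mem_range]
    refine ⟨⟨(p.1 0).is_lt, (p.1 1).is_lt, (p.2 0).is_lt, (p.2 1).is_lt⟩, ?_, ?_⟩ <;> omega
  · rintro ⟨a, b, c, d⟩ hq
    simp only [Finset.mem_coe, Finset.mem_filter, Finset.mem_product, Finset.mem_range] at hq
    obtain ⟨⟨ha, hb, hc, hd⟩, h1, h2⟩ := hq
    simp only [Finset.mem_coe, Finset.mem_filter, Finset.mem_univ, true_and, Fin.sum_univ_two,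
      Matrix.cons_val_zero, Matrix.cons_val_one, Matrix.head_cons,
      Fin.val_cast_of_lt, ha, hb, hc, hd]
    omega
  · intro p _
    refine Prod.ext ?_ ?_ <;> funext i <;> fin_cases i <;>
      simp [Fin.cast_val_eq_self]
  · rintro ⟨a, b, c, d⟩ hq
    simp only [Finset.mem_coe, Finset.mem_filter, Finset.mem_product, Finset.mem_range] at hq
    obtain ⟨⟨ha, hb, hc, hd⟩, h1, h2⟩ := hq
    simp [Fin.val_cast_of_lt, ha, hb, hc, hd]

lemma diag_card (n : ℕ) : ((Qs n).filter (fun p => p.1 = p.2.2.1)).card = rr n := by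
  unfold rr
  split_ifs with h
  · rw [← Finset.card_range (n/4 + 1)]
    apply Finset.card_nbij' (i := fun p => p.2.1)
      (j := fun j => ((n - 4*j)/2, j, (n - 4*j)/2, j))
    · rintro ⟨a, b, c, d⟩ hp
      simp only [Finset.mem_coe, Finset.mem_filter, mem_Qs] at hp
      simp only [Finset.mem_coe, Finset.mem_range]
      omega
    · intro j hj
      simp only [Finset.mem_coe, Finset.mem_range] at hj
      simp only [Finset.mem_coe, Finset.mem_filter, mem_Qs]
      refine ⟨⟨?_, ?_⟩, ?_⟩ <;> first | trivial | omega
    · rintro ⟨a, b, c, d⟩ hp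
      simp only [Finset.mem_coe, Finset.mem_filter, mem_Qs] at hp
      simp only [Prod.mk.injEq, true_and, and_true]
      omega
    · intro j _; rfl
  · rw [Finset.card_eq_zero, Finset.eq_empty_iff_forall_notMem]
    rintro ⟨a, b, c, d⟩ hp
    simp only [Finset.mem_filter, mem_Qs] at hp
    omega

lemma lt_card (n : ℕ) : ((Qs (n+3)).filter (fun p => p.1 < p.2.2.1)).card
    = ((Qs n).filter (fun p => p.1 ≤ p.2.2.1)).card := by
  apply Finset.card_nbij' (i := fun p => (p.1, p.2.1 - 1, p.2.2.1 - 1, p.2.2.2))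
    (j := fun q => (q.1, q.2.1 + 1, q.2.2.1 + 1, q.2.2.2))
  · rintro ⟨a, b, c, d⟩ hp
    simp only [Finset.mem_coe, Finset.mem_filter, mem_Qs] at hp ⊢
    omega
  · rintro ⟨a, b, c, d⟩ hq
    simp only [Finset.mem_coe, Finset.mem_filter, mem_Qs] at hq ⊢
    omega
  · rintro ⟨a, b, c, d⟩ hp
    simp only [Finset.mem_coe, Finset.mem_filter, mem_Qs] at hp
    simp only [Prod.mk.injEq, true_and, and_true]
    omega
  · rintro ⟨a, b, c, d⟩ hq
    simp only [Finset.mem_coe, Finset.mem_filter, mem_Qs] at hq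
    simp only [Prod.mk.injEq, true_and, and_true]
    omega

lemma gt_card (n : ℕ) : ((Qs (n+3)).filter (fun p => p.2.2.1 < p.1)).card
    = ((Qs n).filter (fun p => p.2.2.1 ≤ p.1)).card := by
  apply Finset.card_nbij' (i := fun p => (p.1 - 1, p.2.1, p.2.2.1, p.2.2.2 - 1))
    (j := fun q => (q.1 + 1, q.2.1, q.2.2.1, q.2.2.2 + 1))
  · rintro ⟨a, b, c, d⟩ hp
    simp only [Finset.mem_coe, Finset.mem_filter, mem_Qs] at hp ⊢
    omega
  · rintro ⟨a, b, c, d⟩ hq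
    simp only [Finset.mem_coe, Finset.mem_filter, mem_Qs] at hq ⊢
    omega
  · rintro ⟨a, b, c, d⟩ hp
    simp only [Finset.mem_coe, Finset.mem_filter, mem_Qs] at hp
    simp only [Prod.mk.injEq, true_and, and_true]
    omega
  · rintro ⟨a, b, c, d⟩ hq
    simp only [Finset.mem_coe, Finset.mem_filter, mem_Qs] at hq
    simp only [Prod.mk.injEq, true_and, and_true]
    omega

lemma trisect (s : Finset (ℕ × ℕ × ℕ × ℕ)) : s.card
    = (s.filter (fun p => p.1 < p.2.2.1)).card + (s.filter (fun p => p.2.2.1 < p.1)).card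
      + (s.filter (fun p => p.1 = p.2.2.1)).card := by
  have h1 := Finset.card_filter_add_card_filter_not
    (s := s) (p := fun p => p.1 < p.2.2.1)
  have h2 := Finset.card_filter_add_card_filter_not
    (s := s.filter (fun p => ¬ p.1 < p.2.2.1)) (p := fun p => p.2.2.1 < p.1)
  rw [Finset.filter_filter, Finset.filter_filter] at h2
  have e1 : (s.filter fun p => ¬p.1 < p.2.2.1 ∧ p.2.2.1 < p.1)
      = s.filter (fun p => p.2.2.1 < p.1) := by
    ext p
    simp only [Finset.mem_filter]
    constructor
    · rintro ⟨hs, _, h⟩; exact ⟨hs, h⟩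
    · rintro ⟨hs, h⟩; exact ⟨hs, by omega, h⟩
  have e2 : (s.filter fun p => ¬p.1 < p.2.2.1 ∧ ¬p.2.2.1 < p.1)
      = s.filter (fun p => p.1 = p.2.2.1) := by
    ext p
    simp only [Finset.mem_filter]
    constructor
    · rintro ⟨hs, h, h'⟩; exact ⟨hs, by omega⟩
    · rintro ⟨hs, h⟩; exact ⟨hs, by omega, by omega⟩
  rw [e1, e2] at h2
  omega

lemma bisect (s : Finset (ℕ × ℕ × ℕ × ℕ)) :
    (s.filter (fun p => p.1 ≤ p.2.2.1)).card + (s.filter (fun p => p.2.2.1 ≤ p.1)).card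
    = s.card + (s.filter (fun p => p.1 = p.2.2.1)).card := by
  have e1 : s.filter (fun p => p.1 ≤ p.2.2.1)
      = (s.filter (fun p => p.1 < p.2.2.1)) ∪ (s.filter (fun p => p.1 = p.2.2.1)) := by
    ext p
    simp only [Finset.mem_filter, Finset.mem_union]
    constructor
    · rintro ⟨hs, h⟩
      rcases Nat.lt_or_ge p.1 p.2.2.1 with h' | h'
      · exact Or.inl ⟨hs, h'⟩
      · exact Or.inr ⟨hs, by omega⟩
    · rintro (⟨hs, h⟩ | ⟨hs, h⟩) <;> exact ⟨hs, by omega⟩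
  have e2 : s.filter (fun p => p.2.2.1 ≤ p.1)
      = (s.filter (fun p => p.2.2.1 < p.1)) ∪ (s.filter (fun p => p.1 = p.2.2.1)) := by
    ext p
    simp only [Finset.mem_filter, Finset.mem_union]
    constructor
    · rintro ⟨hs, h⟩
      rcases Nat.lt_or_ge p.2.2.1 p.1 with h' | h'
      · exact Or.inl ⟨hs, h'⟩
      · exact Or.inr ⟨hs, by omega⟩
    · rintro (⟨hs, h⟩ | ⟨hs, h⟩) <;> exact ⟨hs, by omega⟩
  have d1 : Disjoint (s.filter (fun p => p.1 < p.2.2.1)) (s.filter (fun p => p.1 = p.2.2.1)) := by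
    simp only [Finset.disjoint_left, Finset.mem_filter]
    rintro p ⟨hs, h⟩ ⟨_, h'⟩
    omega
  have d2 : Disjoint (s.filter (fun p => p.2.2.1 < p.1)) (s.filter (fun p => p.1 = p.2.2.1)) := by
    simp only [Finset.disjoint_left, Finset.mem_filter]
    rintro p ⟨hs, h⟩ ⟨_, h'⟩
    omega
  rw [e1, e2, Finset.card_union_of_disjoint d1, Finset.card_union_of_disjoint d2, trisect s]
  ring

lemma Qs_rec (n : ℕ) : (Qs (n+3)).card = (Qs n).card + rr (n+3) + rr n := by
  have h := trisect (Qs (n+3))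
  rw [lt_card, gt_card, diag_card] at h
  have h2 := bisect (Qs n)
  rw [diag_card] at h2
  omega

/-! ### Geometric series lemmas -/

lemma geom_eq_gc (n : ℕ) (h : 8 ≤ n) : geomCoeff 8 3 4 n = (gc (n - 8) : ℤ) := by
  unfold geomCoeff gc
  rw [if_pos h]
  norm_cast
  apply Finset.card_nbij' (i := id) (j := id)
  · rintro ⟨x, y⟩ hp
    simp only [Finset.mem_coe, Finset.mem_filter, Finset.mem_product, Finset.mem_range, id] at hp ⊢
    omega
  · rintro ⟨x, y⟩ hp
    simp only [Finset.mem_coe, Finset.mem_filter, Finset.mem_product, Finset.mem_range, id] at hp ⊢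
    omega
  · intro p _; rfl
  · intro p _; rfl

lemma gc_step3 (m : ℕ) : gc (m+3) = gc m + (if (m+3) % 4 = 0 then 1 else 0) := by
  have h1 : (((Finset.range (m+4) ×ˢ Finset.range (m+4)).filter
      (fun p => (3*p.1 + 4*p.2 = m+3) ∧ ¬ p.1 = 0)).card) = gc m := by
    unfold gc
    apply Finset.card_nbij' (i := fun p => (p.1 - 1, p.2)) (j := fun p => (p.1 + 1, p.2))
    · rintro ⟨x, y⟩ hp
      simp only [Finset.mem_coe, Finset.mem_filter, Finset.mem_product, Finset.mem_range] at hp ⊢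
      omega
    · rintro ⟨x, y⟩ hp
      simp only [Finset.mem_coe, Finset.mem_filter, Finset.mem_product, Finset.mem_range] at hp ⊢
      omega
    · rintro ⟨x, y⟩ hp
      simp only [Finset.mem_coe, Finset.mem_filter, Finset.mem_product, Finset.mem_range] at hp
      simp only [Prod.mk.injEq, true_and, and_true]
      omega
    · rintro ⟨x, y⟩ hp
      simp only [Finset.mem_coe, Finset.mem_filter, Finset.mem_product, Finset.mem_range] at hp
      simp only [Prod.mk.injEq, true_and, and_true]
      omega
  have h2 : (((Finset.range (m+4) ×ˢ Finset.range (m+4)).filter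
      (fun p => (3*p.1 + 4*p.2 = m+3) ∧ p.1 = 0)).card) = (if (m+3) % 4 = 0 then 1 else 0) := by
    split_ifs with h4
    · rw [Finset.card_eq_one]
      refine ⟨(0, (m+3)/4), ?_⟩
      ext ⟨x, y⟩
      simp only [Finset.mem_filter, Finset.mem_product, Finset.mem_range,
        Finset.mem_singleton, Prod.mk.injEq]
      omega
    · rw [Finset.card_eq_zero, Finset.eq_empty_iff_forall_notMem]
      rintro ⟨x, y⟩ hp
      simp only [Finset.mem_filter, Finset.mem_product, Finset.mem_range] at hp
      omega
  have hsplit := Finset.card_filter_add_card_filter_not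
    (s := (Finset.range (m+4) ×ˢ Finset.range (m+4)).filter (fun p => 3*p.1 + 4*p.2 = m+3))
    (p := fun p => p.1 = 0)
  rw [Finset.filter_filter, Finset.filter_filter, h1, h2] at hsplit
  have htot : ((Finset.range (m+4) ×ˢ Finset.range (m+4)).filter
      (fun p => 3*p.1 + 4*p.2 = m+3)).card = gc (m+3) := rfl
  rw [htot] at hsplit
  omega

lemma gc_step12 (m : ℕ) : gc (m+12) = gc m + 1 := by
  have h1 := gc_step3 (m+9)
  have h2 := gc_step3 (m+6)
  have h3 := gc_step3 (m+3)
  have h4 := gc_step3 m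
  have e1 : m+9+3 = m+12 := by omega
  rw [e1] at h1
  have e2 : m+6+3 = m+9 := by omega
  rw [e2] at h2
  have e3 : m+3+3 = m+6 := by omega
  rw [e3] at h3
  split_ifs at h1 h2 h3 h4 <;> omega

lemma geom_step12 (n : ℕ) : geomCoeff 8 3 4 (n + 20) = geomCoeff 8 3 4 (n + 8) + 1 := by
  rw [geom_eq_gc _ (by omega), geom_eq_gc _ (by omega)]
  have h1 : n + 20 - 8 = (n + 8 - 8) + 12 := by omega
  rw [h1, gc_step12]
  push_cast
  ring

/-! ### The key arithmetic identity -/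

lemma Rhs_step12 (t : ℕ) : Rhs (t + 20) = Rhs (t + 8) + 1 := by
  unfold Rhs
  have hm3 : (3 ∣ t + 20) ↔ (3 ∣ t + 8) := by omega
  have h4 : (2 ≤ t + 20 ∧ 4 ∣ (t + 20 - 2)) ↔ (2 ≤ t + 8 ∧ 4 ∣ (t + 8 - 2)) := by omega
  rw [if_neg (by omega : ¬ t + 20 = 1), if_neg (by omega : ¬ t + 8 = 1),
    if_congr hm3 rfl rfl, if_congr h4 rfl rfl, geom_step12]
  ring

lemma rr_step (m : ℕ) : rr (m+15) + rr (m+12) = rr (m+3) + rr m + 3 := by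
  unfold rr
  split_ifs <;> omega

set_option maxRecDepth 100000 in
lemma key : ∀ n : ℕ, Rhs (n+1) + Rhs (n+2) + Rhs (n+3) = ((rr (n+3) : ℤ) + (rr n : ℤ)) := by
  intro n
  induction n using Nat.strong_induction_on with
  | _ n ih =>
    by_cases h : n < 20
    · interval_cases n <;> decide
    · obtain ⟨m, rfl⟩ : ∃ m, n = m + 12 := ⟨n - 12, by omega⟩
      have hb := ih m (by omega)
      have e1 : m + 12 + 1 = (m + 1 - 8) + 20 := by omega
      have e2 : m + 12 + 2 = (m + 2 - 8) + 20 := by omega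
      have e3 : m + 12 + 3 = (m + 3 - 8) + 20 := by omega
      rw [e1, Rhs_step12, e2, Rhs_step12, e3, Rhs_step12]
      have f1 : m + 1 - 8 + 8 = m + 1 := by omega
      have f2 : m + 2 - 8 + 8 = m + 2 := by omega
      have f3 : m + 3 - 8 + 8 = m + 3 := by omega
      rw [f1, f2, f3]
      rw [show m + 3 - 8 + 20 = m + 15 by omega]
      have hr := rr_step m
      push_cast at hb ⊢
      linarith [hr]

set_option maxRecDepth 100000 in
lemma qsum : ∀ n : ℕ, ((Qs n).card : ℤ) = ∑ k ∈ Finset.range (n+1), Rhs k := by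
  intro n
  induction n using Nat.strong_induction_on with
  | _ n ih =>
    by_cases h : n < 3
    · interval_cases n <;> decide
    · obtain ⟨m, rfl⟩ : ∃ m, n = m + 3 := ⟨n - 3, by omega⟩
      have hb := ih m (by omega)
      have hrec := Qs_rec m
      have hk := key m
      rw [show m + 3 + 1 = (m + 1) + 1 + 1 + 1 by omega, Finset.sum_range_succ,
        Finset.sum_range_succ, Finset.sum_range_succ]
      rw [show m + 1 + 1 + 1 = m + 3 by omega, show m + 1 + 1 = m + 2 by omega]
      rw [hrec]
      push_cast
      push_cast at hb
      linarith

/-- `f_{0,2}(q) = -q + 1/(1-q^3) + q^2/(1-q^4) + q^8/((1-q^3)(1-q^4))`. -/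
theorem f02_eq (n : ℕ) :
    fmk 2 0 n =
      (if n = 1 then (-1 : ℤ) else 0) + (if 3 ∣ n then 1 else 0)
        + (if 2 ≤ n ∧ 4 ∣ (n - 2) then 1 else 0) + geomCoeff 8 3 4 n := by
  have hR : ∀ m : ℕ, Rhs m = (if m = 1 then (-1 : ℤ) else 0) + (if 3 ∣ m then 1 else 0)
      + (if 2 ≤ m ∧ 4 ∣ (m - 2) then 1 else 0) + geomCoeff 8 3 4 m := fun m => rfl
  rw [← hR]
  unfold fmk
  cases n with
  | zero =>
    rw [if_pos rfl, akm_eq_qs, qsum]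
    simp [Finset.sum_range_succ]
  | succ m =>
    rw [if_neg (by omega : ¬ m + 1 = 0)]
    have : m + 1 - 1 = m := by omega
    rw [this, akm_eq_qs, akm_eq_qs, qsum, qsum, show m + 1 + 1 = (m + 1) + 1 from rfl,
      Finset.sum_range_succ]
    ring
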